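/- Let A_n be the probability that in a uniformly random tournament on n vertices there is no directed path from a fixed vertex a to a fixed distinct vertex s. Then 2^(n-2) · A_n → 1 as n → ∞. -/

import Mathlib

/-- A tournament on `Fin n`: an orientation of each edge `{i,j}`, `i < j`, of the complete
graph. `ω ⟨(i,j),h⟩ = true` means the edge is oriented `i → j`. Each of the `2^(n choose 2)`
orientations is equally likely under the uniform probability `Pr`. -/
abbrev Orient (n : ℕ) : Type := {p : Fin n × Fin n // p.1 < p.2} → Bool

/-- The edge between `i` and `j` is oriented from `i` to `j`. -/
def dir {n : ℕ} (ω : Orient n) (i j : Fin n) : Prop :=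
  (∃ h : i < j, ω ⟨(i, j), h⟩ = true) ∨ (∃ h : j < i, ω ⟨(j, i), h⟩ = false)

/-- There is a directed path from `a` to `s` in the tournament `ω`. -/
def reaches {n : ℕ} (ω : Orient n) (a s : Fin n) : Prop :=
  Relation.TransGen (dir ω) a s

/-- The probability of the event `E` for a uniformly random tournament on `n` vertices. -/
noncomputable def Pr (n : ℕ) (E : Orient n → Prop) : ℝ :=
  haveI := Classical.decPred E
  ((Finset.univ.filter E).card : ℝ) / (Fintype.card (Orient n) : ℝ)

open Finset

abbrev Edge (n : ℕ) := {p : Fin n × Fin n // p.1 < p.2}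

/-- the no-path event -/
def NP (n : ℕ) (ω : Orient n) : Prop :=
  ∀ a s : Fin n, a.val = 0 → s.val = 1 → ¬ reaches ω a s

lemma card_fix {α : Type*} [Fintype α] [DecidableEq α] (S : Finset α) (v : α → Bool) :
    (Finset.univ.filter (fun ω : α → Bool => ∀ e ∈ S, ω e = v e)).card
      = 2 ^ (Fintype.card α - S.card) := by
  classical
  have h : (Finset.univ.filter (fun ω : α → Bool => ∀ e ∈ S, ω e = v e)).card
      = Fintype.card {ω : α → Bool // ∀ e ∈ S, ω e = v e} := by
    rw [Fintype.card_subtype]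
  rw [h]
  have e : {ω : α → Bool // ∀ e ∈ S, ω e = v e} ≃ ({x : α // x ∉ S} → Bool) :=
    { toFun := fun ω x => ω.1 x.1
      invFun := fun f => ⟨fun x => if h : x ∈ S then v x else f ⟨x, h⟩,
        fun e he => by simp [he]⟩
      left_inv := fun ω => by
        ext x
        by_cases h : x ∈ S <;> simp [h, ω.2 x]
      right_inv := fun f => by
        ext x
        simp [x.2] }
  rw [Fintype.card_congr e, Fintype.card_fun, Fintype.card_bool]
  congr 1
  simp [Fintype.card_subtype, Finset.filter_not, Finset.card_sdiff_of_subset (Finset.subset_univ _),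
    Finset.filter_mem_eq_inter]

/-- edges incident to a fixed vertex -/
lemma card_incident {n : ℕ} (w : Fin n) :
    (Finset.univ.filter (fun p : Edge n => p.val.1 = w ∨ p.val.2 = w)).card = n - 1 := by
  classical
  have key : (Finset.univ.filter
      (fun p : Edge n => p.val.1 = w ∨ p.val.2 = w)).card = (Finset.univ.erase w).card := by
    apply Finset.card_bij (fun p _ => if p.val.1 = w then p.val.2 else p.val.1)
    · intro p hp
      simp only [Finset.mem_filter, Finset.mem_univ, true_and] at hp
      have hlt : p.val.1.val < p.val.2.val := p.2
      by_cases h : p.val.1 = w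
      · rw [if_pos h]
        simp only [Finset.mem_erase, Finset.mem_univ, and_true, Fin.ext_iff]
        have := congrArg Fin.val h; omega
      · rw [if_neg h]
        simp only [Finset.mem_erase, Finset.mem_univ, and_true]
        exact h
    · intro p hp q hq hpq
      simp only [Finset.mem_filter, Finset.mem_univ, true_and] at hp hq
      have hp2 : p.val.1.val < p.val.2.val := p.2
      have hq2 : q.val.1.val < q.val.2.val := q.2
      have dp : p.val.1.val = w.val ∨ p.val.2.val = w.val := by
        rcases hp with h | h
        · exact Or.inl (congrArg Fin.val h)
        · exact Or.inr (congrArg Fin.val h)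
      have dq : q.val.1.val = w.val ∨ q.val.2.val = w.val := by
        rcases hq with h | h
        · exact Or.inl (congrArg Fin.val h)
        · exact Or.inr (congrArg Fin.val h)
      apply Subtype.ext
      by_cases h1 : p.val.1 = w <;> by_cases h2 : q.val.1 = w
      · rw [if_pos h1, if_pos h2] at hpq
        have e1 := congrArg Fin.val h1
        have e2 := congrArg Fin.val h2
        have e3 := congrArg Fin.val hpq
        exact Prod.ext (Fin.ext (by omega)) (Fin.ext (by omega))
      · rw [if_pos h1, if_neg h2] at hpq
        have e1 := congrArg Fin.val h1
        have e3 := congrArg Fin.val hpq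
        have h2' : q.val.1.val ≠ w.val := fun hc => h2 (Fin.ext hc)
        exact Prod.ext (Fin.ext (by omega)) (Fin.ext (by omega))
      · rw [if_neg h1, if_pos h2] at hpq
        have e2 := congrArg Fin.val h2
        have e3 := congrArg Fin.val hpq
        have h1' : p.val.1.val ≠ w.val := fun hc => h1 (Fin.ext hc)
        exact Prod.ext (Fin.ext (by omega)) (Fin.ext (by omega))
      · rw [if_neg h1, if_neg h2] at hpq
        have e3 := congrArg Fin.val hpq
        have h1' : p.val.1.val ≠ w.val := fun hc => h1 (Fin.ext hc)
        have h2' : q.val.1.val ≠ w.val := fun hc => h2 (Fin.ext hc)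
        exact Prod.ext (Fin.ext (by omega)) (Fin.ext (by omega))
    · intro x hx
      simp only [Finset.mem_erase, Finset.mem_univ, and_true] at hx
      rcases lt_or_gt_of_ne hx with h | h
      · exact ⟨⟨(x, w), h⟩, by simp, by simp [show x ≠ w from hx]⟩
      · exact ⟨⟨(w, x), h⟩, by simp, by simp⟩
  rw [key, Finset.card_erase_of_mem (Finset.mem_univ w), Finset.card_univ, Fintype.card_fin]

lemma card_cross {n : ℕ} (R : Finset (Fin n)) :
    (Finset.univ.filter (fun p : Edge n => Xor (p.val.1 ∈ R) (p.val.2 ∈ R))).card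
      = R.card * (n - R.card) := by
  classical
  have key : (Finset.univ.filter
        (fun p : Edge n => Xor (p.val.1 ∈ R) (p.val.2 ∈ R))).card
      = (R ×ˢ (Finset.univ \ R)).card := by
    apply Finset.card_bij (fun p _ => if p.val.1 ∈ R then p.val else p.val.swap)
    · intro p hp
      simp only [Finset.mem_filter, Finset.mem_univ, true_and] at hp; rw [xor_def] at hp
      by_cases h : p.val.1 ∈ R
      · rw [if_pos h]
        rcases hp with ⟨_, h2⟩ | ⟨_, h2⟩
        · exact Finset.mem_product.2 ⟨h, by simp [h2]⟩
        · exact absurd h h2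
      · rw [if_neg h]
        rcases hp with ⟨h1, _⟩ | ⟨h1, _⟩
        · exact absurd h1 h
        · exact Finset.mem_product.2 ⟨h1, by simp [h]⟩
    · intro p hp q hq hpq
      have hp2 : p.val.1 < p.val.2 := p.2
      have hq2 : q.val.1 < q.val.2 := q.2
      apply Subtype.ext
      by_cases h1 : p.val.1 ∈ R <;> by_cases h2 : q.val.1 ∈ R
      · rw [if_pos h1, if_pos h2] at hpq; exact hpq
      · rw [if_pos h1, if_neg h2] at hpq
        have e1 := congrArg Prod.fst hpq
        have e2 := congrArg Prod.snd hpq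
        simp only [Prod.fst_swap, Prod.snd_swap] at e1 e2
        exfalso
        rw [e1] at hp2; rw [← e2] at hq2
        exact lt_irrefl _ (hp2.trans hq2)
      · rw [if_neg h1, if_pos h2] at hpq
        have e1 := congrArg Prod.fst hpq
        have e2 := congrArg Prod.snd hpq
        simp only [Prod.fst_swap, Prod.snd_swap] at e1 e2
        exfalso
        rw [← e1] at hq2; rw [e2] at hp2
        exact lt_irrefl _ (hq2.trans hp2)
      · rw [if_neg h1, if_neg h2] at hpq
        have := congrArg Prod.swap hpq
        simpa using this
    · intro x hx
      rw [Finset.mem_product] at hx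
      obtain ⟨hx1, hx2⟩ := hx
      simp only [Finset.mem_sdiff, Finset.mem_univ, true_and] at hx2
      have hne : x.1 ≠ x.2 := fun hc => hx2 (hc ▸ hx1)
      rcases lt_or_gt_of_ne hne with h | h
      · refine ⟨⟨(x.1, x.2), h⟩, ?_, ?_⟩
        · simp only [Finset.mem_filter, Finset.mem_univ, true_and]; rw [xor_def]
          exact Or.inl ⟨hx1, hx2⟩
        · simp [hx1]
      · refine ⟨⟨(x.2, x.1), h⟩, ?_, ?_⟩
        · simp only [Finset.mem_filter, Finset.mem_univ, true_and]; rw [xor_def]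
          exact Or.inr ⟨hx1, hx2⟩
        · simp [hx2]
  rw [key, Finset.card_product, Finset.card_sdiff_of_subset (Finset.subset_univ R), Finset.card_univ,
    Fintype.card_fin]

lemma choose_le_two_pow' (m k : ℕ) : m.choose k ≤ 2 ^ m := by
  rcases le_or_gt k m with h | h
  · calc m.choose k ≤ ∑ i ∈ Finset.range (m+1), m.choose i :=
        Finset.single_le_sum (fun i _ => Nat.zero_le _) (Finset.mem_range.2 (Nat.lt_succ_of_le h))
    _ = 2 ^ m := Nat.sum_range_choose m
  · rw [Nat.choose_eq_zero_of_lt h]; exact Nat.zero_le _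

lemma choose_bound (j l : ℕ) : (j+l+2).choose (j+1) ≤ 8*(j+l+2) * 2^(j*l) := by
  rcases Nat.eq_zero_or_pos j with hj | hj
  · subst hj
    simp [Nat.choose_one_right]
  rcases Nat.eq_zero_or_pos l with hl | hl
  · subst hl
    have h : (j+0+2).choose (j+1) = j+2 := by
      rw [show j+0+2 = (j+1)+1 by ring, Nat.choose_succ_self_right]
    rw [h]
    nlinarith [Nat.one_le_two_pow (n := j*0)]
  · have h1 : (j+l+2).choose (j+1) ≤ 2^(j+l+2) := choose_le_two_pow' _ _
    have h2 : j + l ≤ j * l + 1 := by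
      rcases Nat.lt_or_ge j 2 with h | h
      · have hj1 : j = 1 := by omega
        subst hj1; rw [one_mul]; omega
      · rcases Nat.lt_or_ge l 2 with h' | h'
        · have hl1 : l = 1 := by omega
          subst hl1; rw [mul_one]
        · exact (Nat.add_le_mul h h').trans (Nat.le_succ _)
    have h3 : (2:ℕ)^(j+l+2) ≤ 8 * (j+l+2) * 2^(j*l) := by
      have e : (2:ℕ)^(j+l+2) = 8 * 2^(j+l-1) := by
        rw [show j+l+2 = 3 + (j+l-1) by omega, pow_add]
        norm_num
      rw [e]
      have hle : (2:ℕ)^(j+l-1) ≤ (j+l+2) * 2^(j*l) := by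
        calc (2:ℕ)^(j+l-1) ≤ 2^(j*l) := Nat.pow_le_pow_right (by norm_num) (by omega)
        _ ≤ (j+l+2) * 2^(j*l) := Nat.le_mul_of_pos_left _ (by omega)
      calc 8 * 2^(j+l-1) ≤ 8 * ((j+l+2) * 2^(j*l)) := Nat.mul_le_mul_left _ hle
      _ = 8 * (j+l+2) * 2^(j*l) := by ring
    exact h1.trans h3

lemma middle_term_bound (m k : ℕ) (hk1 : 1 ≤ k) (hk2 : k ≤ m - 1) (hm : 2 ≤ m) :
    (m.choose k : ℝ) * (1/2)^((k+1)*(m+1-k)) ≤ 8*m*(1/2)^(2*m) := by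
  obtain ⟨j, rfl⟩ : ∃ j, k = j + 1 := ⟨k-1, by omega⟩
  obtain ⟨l, rfl⟩ : ∃ l, m = j + l + 2 := ⟨m-j-2, by omega⟩
  have he : (j+1+1)*((j+l+2)+1-(j+1)) = j*l + 2*(j+l+2) := by
    rw [show (j+l+2)+1-(j+1) = l + 2 by omega]; ring
  rw [he, pow_add]
  have hc : (((j+l+2).choose (j+1) : ℝ)) ≤ 8*(j+l+2) * 2^(j*l) := by
    exact_mod_cast choose_bound j l
  calc ((j+l+2).choose (j+1) : ℝ) * ((1/2)^(j*l) * (1/2)^(2*(j+l+2)))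
      ≤ (8*(j+l+2) * 2^(j*l)) * ((1/2)^(j*l) * (1/2)^(2*(j+l+2))) := by
        apply mul_le_mul_of_nonneg_right hc
        positivity
    _ = (8*(j+l+2)) * ((2^(j*l) * (1/2)^(j*l)) * (1/2)^(2*(j+l+2))) := by ring
    _ = 8*(j+l+2)*(1/2)^(2*(j+l+2)) := by
        rw [← mul_pow]
        norm_num
  push_cast
  ring_nf
  rfl

lemma count_lower (n : ℕ) (hn : 2 ≤ n) :
    2*n - 3 ≤ Fintype.card (Edge n) ∧
    2^(Fintype.card (Edge n) - (n-1)) + 2^(Fintype.card (Edge n) - (n-1))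
      ≤ Nat.card {ω : Orient n // NP n ω} + 2^(Fintype.card (Edge n) - (2*n-3)) := by
  classical
  have h0n : 0 < n := by omega
  have h1n : 1 < n := by omega
  set a : Fin n := ⟨0, h0n⟩ with ha
  set s : Fin n := ⟨1, h1n⟩ with hs
  have haval : a.val = 0 := rfl
  have hsval : s.val = 1 := rfl
  set S1 : Finset (Edge n) := univ.filter (fun p : Edge n => p.val.1 = a ∨ p.val.2 = a) with hS1
  set S2 : Finset (Edge n) := univ.filter (fun p : Edge n => p.val.1 = s ∨ p.val.2 = s) with hS2
  set v : Edge n → Bool := fun p => if p.val.1 = a then false else true with hv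
  have hsa : s ≠ a := by
    intro hc
    have h := congrArg Fin.val hc
    rw [haval, hsval] at h
    omega
  have hS1card : S1.card = n - 1 := by rw [hS1, card_incident]
  have hS2card : S2.card = n - 1 := by rw [hS2, card_incident]
  have hlt_as : a < s := by
    rw [Fin.lt_def, haval, hsval]; omega
  have hinter : S1 ∩ S2 = {⟨(a, s), hlt_as⟩} := by
    ext p
    rw [Finset.mem_inter, hS1, hS2]
    simp only [Finset.mem_filter, Finset.mem_univ, true_and, Finset.mem_singleton]
    constructor
    · have hlt : p.val.1.val < p.val.2.val := p.2
      rintro ⟨h1 | h1, h2 | h2⟩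
      · exfalso
        have h3 := congrArg Fin.val (h1.symm.trans h2)
        rw [haval, hsval] at h3
        omega
      · exact Subtype.ext (Prod.ext h1 h2)
      · exfalso
        have e1 := congrArg Fin.val h1
        have e2 := congrArg Fin.val h2
        rw [haval] at e1
        rw [hsval] at e2
        omega
      · exfalso
        have h3 := congrArg Fin.val (h1.symm.trans h2)
        rw [haval, hsval] at h3
        omega
    · rintro rfl
      exact ⟨Or.inl rfl, Or.inr rfl⟩
  have hcardU : (S1 ∪ S2).card = 2*n - 3 := by
    have h := Finset.card_union_add_card_inter S1 S2
    rw [hinter, Finset.card_singleton, hS1card, hS2card] at h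
    omega
  -- the union of the two events is contained in NP
  have hsub : univ.filter (fun ω : Orient n => ∀ e ∈ S1, ω e = v e)
      ∪ univ.filter (fun ω : Orient n => ∀ e ∈ S2, ω e = v e) ⊆ univ.filter (NP n) := by
    rw [← Finset.filter_or]
    intro ω hω
    simp only [Finset.mem_filter, Finset.mem_univ, true_and] at hω ⊢
    intro a' s' ha' hs' hreach
    have haa : a' = a := Fin.ext (by rw [haval]; exact ha')
    have hss : s' = s := Fin.ext (by rw [hsval]; exact hs')
    rw [haa, hss] at hreach
    rcases hω with hω | hω
    · -- a is a sink : no first step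
      obtain ⟨c, hstep, -⟩ := Relation.TransGen.head'_iff.mp hreach
      rcases hstep with ⟨h, hval⟩ | ⟨h, hval⟩
      · have hmem : (⟨(a, c), h⟩ : Edge n) ∈ S1 := by
          rw [hS1]
          exact Finset.mem_filter.mpr ⟨Finset.mem_univ _, Or.inl rfl⟩
        have heq := hω _ hmem
        have hveq : v (⟨(a, c), h⟩ : Edge n) = false := by simp [hv]
        rw [hval, hveq] at heq
        exact Bool.noConfusion heq
      · have hc : c.val < a.val := h
        rw [haval] at hc
        omega
    · -- s is a source : no last step
      obtain ⟨c, -, hstep⟩ := Relation.TransGen.tail'_iff.mp hreach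
      rcases hstep with ⟨h, hval⟩ | ⟨h, hval⟩
      · have hca : c = a := by
          apply Fin.ext
          have h1 : c.val < s.val := h
          rw [hsval] at h1
          rw [haval]
          omega
        have hmem : (⟨(c, s), h⟩ : Edge n) ∈ S2 := by
          rw [hS2]
          exact Finset.mem_filter.mpr ⟨Finset.mem_univ _, Or.inr rfl⟩
        have heq := hω _ hmem
        have hveq : v (⟨(c, s), h⟩ : Edge n) = false := by simp [hv, hca]
        rw [hval, hveq] at heq
        exact Bool.noConfusion heq
      · have hmem : (⟨(s, c), h⟩ : Edge n) ∈ S2 := by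
          rw [hS2]
          exact Finset.mem_filter.mpr ⟨Finset.mem_univ _, Or.inl rfl⟩
        have heq := hω _ hmem
        have hveq : v (⟨(s, c), h⟩ : Edge n) = true := by simp [hv, hsa]
        rw [hval, hveq] at heq
        exact Bool.noConfusion heq
  -- now the cardinalities (these poison `omega`, so come last)
  have hcard1 : (univ.filter (fun ω : Orient n => ∀ e ∈ S1, ω e = v e)).card
      = 2^(Fintype.card (Edge n) - (n-1)) := by
    rw [card_fix S1 v, hS1card]
  have hcard2 : (univ.filter (fun ω : Orient n => ∀ e ∈ S2, ω e = v e)).card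
      = 2^(Fintype.card (Edge n) - (n-1)) := by
    rw [card_fix S2 v, hS2card]
  have hcard12 : (univ.filter (fun ω : Orient n => ∀ e ∈ S1 ∪ S2, ω e = v e)).card
      = 2^(Fintype.card (Edge n) - (2*n-3)) := by
    rw [card_fix (S1 ∪ S2) v, hcardU]
  have hifilters : univ.filter (fun ω : Orient n => ∀ e ∈ S1, ω e = v e)
      ∩ univ.filter (fun ω : Orient n => ∀ e ∈ S2, ω e = v e)
      = univ.filter (fun ω : Orient n => ∀ e ∈ S1 ∪ S2, ω e = v e) := by
    rw [← Finset.filter_and]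
    apply Finset.filter_congr
    intro ω _
    constructor
    · rintro ⟨h1, h2⟩ e he
      rcases Finset.mem_union.mp he with h | h
      · exact h1 e h
      · exact h2 e h
    · intro h
      exact ⟨fun e he => h e (Finset.mem_union_left _ he),
        fun e he => h e (Finset.mem_union_right _ he)⟩
  have hie := Finset.card_union_add_card_inter
    (univ.filter (fun ω : Orient n => ∀ e ∈ S1, ω e = v e))
    (univ.filter (fun ω : Orient n => ∀ e ∈ S2, ω e = v e))
  rw [hifilters, hcard12, hcard1, hcard2] at hie
  have hle : ((univ.filter (fun ω : Orient n => ∀ e ∈ S1, ω e = v e))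
      ∪ (univ.filter (fun ω : Orient n => ∀ e ∈ S2, ω e = v e))).card
      ≤ (univ.filter (NP n)).card :=
    Finset.card_le_card hsub
  have hNP : (univ.filter (NP n)).card = Nat.card {ω : Orient n // NP n ω} := by
    rw [Nat.card_eq_fintype_card, Fintype.card_subtype]
  refine ⟨by rw [← hcardU]; exact Finset.card_le_univ _, ?_⟩
  calc 2^(Fintype.card (Edge n) - (n-1)) + 2^(Fintype.card (Edge n) - (n-1))
      = ((univ.filter (fun ω : Orient n => ∀ e ∈ S1, ω e = v e))
        ∪ (univ.filter (fun ω : Orient n => ∀ e ∈ S2, ω e = v e))).card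
        + 2^(Fintype.card (Edge n) - (2*n-3)) := hie.symm
    _ ≤ (univ.filter (NP n)).card + 2^(Fintype.card (Edge n) - (2*n-3)) :=
        Nat.add_le_add_right hle _
    _ = Nat.card {ω : Orient n // NP n ω} + 2^(Fintype.card (Edge n) - (2*n-3)) := by rw [hNP]

lemma count_upper (n : ℕ) (a s : Fin n) (ha : a.val = 0) (hs : s.val = 1) :
    Nat.card {ω : Orient n // NP n ω}
      ≤ ∑ R ∈ (univ : Finset (Finset (Fin n))).filter (fun R => a ∈ R ∧ s ∉ R),
          2^(Fintype.card (Edge n) - R.card * (n - R.card)) := by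
  classical
  have hNP : Nat.card {ω : Orient n // NP n ω} = (univ.filter (NP n)).card := by
    rw [Nat.card_eq_fintype_card, Fintype.card_subtype]
  rw [hNP]
  set 𝓡 : Finset (Finset (Fin n)) := univ.filter (fun R => a ∈ R ∧ s ∉ R) with h𝓡
  have hsub : univ.filter (NP n) ⊆ 𝓡.biUnion (fun R =>
      univ.filter (fun ω : Orient n =>
        ∀ e ∈ univ.filter (fun p : Edge n => Xor (p.val.1 ∈ R) (p.val.2 ∈ R)),
          ω e = (if e.val.1 ∈ R then false else true))) := by
    intro ω hω
    simp only [Finset.mem_filter, Finset.mem_univ, true_and] at hω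
    set Rω : Finset (Fin n) := univ.filter (fun x => x = a ∨ reaches ω a x) with hRω
    have hmemRω : ∀ x : Fin n, x ∈ Rω ↔ (x = a ∨ reaches ω a x) := by
      intro x
      rw [hRω]
      simp
    have hstep : ∀ i j : Fin n, i ∈ Rω → dir ω i j → j ∈ Rω := by
      intro i j hi hdir
      rw [hmemRω] at hi ⊢
      right
      rcases hi with rfl | hi
      · exact Relation.TransGen.single hdir
      · exact hi.tail hdir
    apply Finset.mem_biUnion.mpr
    refine ⟨Rω, ?_, ?_⟩
    · rw [h𝓡]
      simp only [Finset.mem_filter, Finset.mem_univ, true_and]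
      constructor
      · rw [hmemRω]; exact Or.inl rfl
      · rw [hmemRω]
        rintro (hc | hc)
        · have := congrArg Fin.val hc
          rw [ha, hs] at this
          omega
        · exact hω a s ha hs hc
    · simp only [Finset.mem_filter, Finset.mem_univ, true_and]
      intro e he
      rcases he with ⟨hi, hj⟩ | ⟨hj, hi⟩
      · rw [if_pos hi]
        by_contra hne
        have htrue : ω e = true := by
          cases hωe : ω e
          · exact absurd hωe hne
          · rfl
        have hdir : dir ω e.val.1 e.val.2 := Or.inl ⟨e.2, htrue⟩
        exact hj (hstep _ _ hi hdir)
      · rw [if_neg hi]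
        by_contra hne
        have hfalse : ω e = false := by
          cases hωe : ω e
          · rfl
          · exact absurd hωe hne
        have hdir : dir ω e.val.2 e.val.1 := Or.inr ⟨e.2, hfalse⟩
        exact hi (hstep _ _ hj hdir)
  calc (univ.filter (NP n)).card
      ≤ (𝓡.biUnion (fun R =>
          univ.filter (fun ω : Orient n =>
            ∀ e ∈ univ.filter (fun p : Edge n => Xor (p.val.1 ∈ R) (p.val.2 ∈ R)),
              ω e = (if e.val.1 ∈ R then false else true)))).card :=
        Finset.card_le_card hsub
    _ ≤ ∑ R ∈ 𝓡, (univ.filter (fun ω : Orient n =>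
            ∀ e ∈ univ.filter (fun p : Edge n => Xor (p.val.1 ∈ R) (p.val.2 ∈ R)),
              ω e = (if e.val.1 ∈ R then false else true))).card :=
        Finset.card_biUnion_le
    _ = ∑ R ∈ 𝓡, 2^(Fintype.card (Edge n) - R.card * (n - R.card)) := by
        apply Finset.sum_congr rfl
        intro R _
        rw [card_fix (univ.filter (fun p : Edge n => Xor (p.val.1 ∈ R) (p.val.2 ∈ R)))
          (fun p => if p.val.1 ∈ R then false else true), card_cross]

lemma pow_sub_real (N c : ℕ) (h : c ≤ N) : ((2:ℝ))^(N - c) = 2^N * (1/2)^c := by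
  rw [pow_sub₀ (2:ℝ) (by norm_num) h, one_div, inv_pow, ← div_eq_mul_inv]

lemma Pr_eq (n : ℕ) : Pr n (NP n)
    = (Nat.card {ω : Orient n // NP n ω} : ℝ) / (2:ℝ)^(Fintype.card (Edge n)) := by
  classical
  rw [Pr]
  congr 1
  · congr 1
    rw [Finset.filter_congr_decidable, Nat.card_eq_fintype_card, Fintype.card_subtype]
  · rw [Fintype.card_fun, Fintype.card_bool]
    push_cast
    rfl

lemma pr_lower (n : ℕ) (hn : 2 ≤ n) :
    1 - (1/2:ℝ)^(n-1) ≤ 2^(n-2) * Pr n (NP n) := by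
  obtain ⟨hU, hcnt⟩ := count_lower n hn
  obtain ⟨k, rfl⟩ : ∃ k, n = k + 2 := ⟨n - 2, by omega⟩
  rw [Pr_eq]
  set N := Fintype.card (Edge (k+2)) with hN
  set C : ℝ := (Nat.card {ω : Orient (k+2) // NP (k+2) ω} : ℝ) with hC
  have e1 : k + 2 - 1 = k + 1 := by omega
  have e2 : 2*(k+2) - 3 = 2*k + 1 := by omega
  have e3 : k + 2 - 2 = k := by omega
  rw [e1, e2] at hcnt
  rw [e2] at hU
  rw [e1, e3]
  have hle1 : k + 1 ≤ N := by omega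
  have hcast : (2:ℝ)^(N-(k+1)) + 2^(N-(k+1)) ≤ C + 2^(N-(2*k+1)) := by
    rw [hC]
    exact_mod_cast hcnt
  rw [pow_sub_real N (k+1) hle1, pow_sub_real N (2*k+1) hU] at hcast
  have hNpos : (0:ℝ) < 2^N := by positivity
  have hX : (2:ℝ)^N * (1/2)^(k+1) + 2^N * (1/2)^(k+1) - 2^N * (1/2)^(2*k+1) ≤ C := by
    linarith
  have hkey : (2:ℝ)^k * ((2^N * (1/2)^(k+1) + 2^N * (1/2)^(k+1) - 2^N * (1/2)^(2*k+1)) / 2^N)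
      = 1 - (1/2)^(k+1) := by
    rw [show (2:ℝ)^N * (1/2)^(k+1) + 2^N * (1/2)^(k+1) - 2^N * (1/2)^(2*k+1)
        = 2^N * (2*(1/2)^(k+1) - (1/2)^(2*k+1)) by ring]
    rw [mul_comm ((2:ℝ)^N) _, mul_div_assoc, div_self (ne_of_gt hNpos), mul_one]
    have hp1 : ((1:ℝ)/2)^(k+1) = (1/2)^k * (1/2) := pow_succ _ _
    have hp2 : ((1:ℝ)/2)^(2*k+1) = (1/2)^k * ((1/2)^k * (1/2)) := by
      rw [show 2*k+1 = k + (k+1) from by omega, pow_add, hp1]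
    have hut : (2:ℝ)^k * (1/2)^k = 1 := by
      rw [← mul_pow]; norm_num
    rw [hp1, hp2]
    linear_combination (1 - (1/2:ℝ)^k * (1/2)) * hut
  have hCnn : (0:ℝ) ≤ C := by rw [hC]; positivity
  calc (1:ℝ) - (1/2)^(k+1)
      = 2^k * ((2^N * (1/2)^(k+1) + 2^N * (1/2)^(k+1) - 2^N * (1/2)^(2*k+1)) / 2^N) := hkey.symm
    _ ≤ 2^k * (C / 2^N) := by
        apply mul_le_mul_of_nonneg_left _ (by positivity)
        exact div_le_div_of_nonneg_right hX (le_of_lt hNpos)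

lemma sum_bound (n : ℕ) (hn : 4 ≤ n) (a s : Fin n) (ha : a.val = 0) (hs : s.val = 1) :
    ∑ R ∈ (univ : Finset (Finset (Fin n))).filter (fun R => a ∈ R ∧ s ∉ R),
        ((1/2:ℝ))^(R.card * (n - R.card))
      ≤ (1/2:ℝ)^(n-2) * (1 + 8*(n:ℝ)^2*(1/2:ℝ)^(n-2)) := by
  classical
  have hsa : a ≠ s := by
    intro hc
    have h := congrArg Fin.val hc
    rw [ha, hs] at h
    omega
  set W : Finset (Fin n) := (univ.erase s).erase a with hW
  have hainW : a ∉ W := by rw [hW]; simp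
  have hsinW : s ∉ W := by rw [hW]; simp
  have haes : a ∈ univ.erase s := Finset.mem_erase.mpr ⟨hsa, Finset.mem_univ _⟩
  have hWcard : W.card = n - 2 := by
    rw [hW, Finset.card_erase_of_mem haes, Finset.card_erase_of_mem (Finset.mem_univ s),
      Finset.card_univ, Fintype.card_fin]
    omega
  have hreindex : ∑ R ∈ (univ : Finset (Finset (Fin n))).filter (fun R => a ∈ R ∧ s ∉ R),
        ((1/2:ℝ))^(R.card * (n - R.card))
      = ∑ T ∈ W.powerset, ((1/2:ℝ))^((T.card+1) * (n - (T.card+1))) := by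
    refine Finset.sum_bij' (fun R _ => R.erase a) (fun T _ => insert a T)
      ?hi ?hj ?left ?right ?hval
    case hi =>
      intro R hR
      simp only [Finset.mem_filter, Finset.mem_univ, true_and] at hR
      rw [Finset.mem_powerset]
      intro x hx
      rw [Finset.mem_erase] at hx
      rw [hW, Finset.mem_erase, Finset.mem_erase]
      refine ⟨hx.1, ?_, Finset.mem_univ _⟩
      intro hc
      exact hR.2 (hc ▸ hx.2)
    case hj =>
      intro T hT
      rw [Finset.mem_powerset] at hT
      simp only [Finset.mem_filter, Finset.mem_univ, true_and]
      refine ⟨Finset.mem_insert_self _ _, ?_⟩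
      intro hc
      rcases Finset.mem_insert.mp hc with hc | hc
      · exact hsa hc.symm
      · exact hsinW (hT hc)
    case left =>
      intro R hR
      simp only [Finset.mem_filter, Finset.mem_univ, true_and] at hR
      exact Finset.insert_erase hR.1
    case right =>
      intro T hT
      rw [Finset.mem_powerset] at hT
      apply Finset.erase_insert
      intro hc
      exact hainW (hT hc)
    case hval =>
      intro R hR
      simp only [Finset.mem_filter, Finset.mem_univ, true_and] at hR
      have hce : (R.erase a).card = R.card - 1 := Finset.card_erase_of_mem hR.1
      have hpos : 1 ≤ R.card := Finset.card_pos.mpr ⟨a, hR.1⟩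
      rw [hce, show R.card - 1 + 1 = R.card from by omega]
  rw [hreindex,
    Finset.sum_powerset_apply_card (fun m => ((1/2:ℝ))^((m+1) * (n - (m+1)))), hWcard]
  obtain ⟨m', rfl⟩ : ∃ m', n = m' + 4 := ⟨n - 4, by omega⟩
  have e2 : m' + 4 - 2 = m' + 2 := by omega
  rw [e2]
  rw [Finset.sum_range_succ, Finset.sum_range_succ']
  have hend0 : ((m'+2).choose 0) • ((1/2:ℝ))^((0+1) * (m'+4 - (0+1))) = ((1/2:ℝ))^(m'+3) := by
    rw [Nat.choose_zero_right, one_smul, show (0+1) * (m'+4 - (0+1)) = m'+3 from by omega]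
  have hendm : ((m'+2).choose (m'+2)) • ((1/2:ℝ))^((m'+2+1) * (m'+4 - (m'+2+1)))
      = ((1/2:ℝ))^(m'+3) := by
    rw [Nat.choose_self, one_smul, show m'+4 - (m'+2+1) = 1 from by omega, mul_one]
  rw [hend0, hendm]
  have hb1 : ∀ k ∈ Finset.range (m'+1),
      ((m'+2).choose (k+1)) • ((1/2:ℝ))^((k+1+1) * (m'+4 - (k+1+1)))
      ≤ 8*((m'+2 : ℕ) : ℝ)*((1/2:ℝ))^(2*(m'+2)) := by
    intro k hk
    rw [Finset.mem_range] at hk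
    have hb := middle_term_bound (m'+2) (k+1) (by omega) (by omega) (by omega)
    have hexp : (k+1+1) * (m'+4 - (k+1+1)) = (k+1+1) * (m'+2+1 - (k+1)) := by
      congr 1
      omega
    rw [hexp, nsmul_eq_mul]
    exact hb
  have hmid : ∑ k ∈ Finset.range (m'+1),
      ((m'+2).choose (k+1)) • ((1/2:ℝ))^((k+1+1) * (m'+4 - (k+1+1)))
      ≤ ((m'+1 : ℕ) : ℝ) * (8*((m'+2 : ℕ) : ℝ)*((1/2:ℝ))^(2*(m'+2))) := by
    have h := Finset.sum_le_card_nsmul (Finset.range (m'+1)) _ _ hb1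
    rw [Finset.card_range] at h
    rw [nsmul_eq_mul] at h
    exact h
  have hP3 : ((1/2:ℝ))^(m'+3) = ((1/2:ℝ))^(m'+2) * (1/2) := pow_succ _ _
  have hP2m : ((1/2:ℝ))^(2*(m'+2)) = ((1/2:ℝ))^(m'+2) * ((1/2:ℝ))^(m'+2) := by
    rw [← pow_add]
    congr 1
    omega
  have hPnn : (0:ℝ) ≤ ((1/2:ℝ))^(m'+2) := by positivity
  have htarget : ((1/2:ℝ))^(m'+3) + ((1/2:ℝ))^(m'+3)
      + ((m'+1 : ℕ) : ℝ) * (8*((m'+2 : ℕ) : ℝ)*((1/2:ℝ))^(2*(m'+2)))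
      ≤ (1/2:ℝ)^(m'+2) * (1 + 8*(((m'+4:ℕ)):ℝ)^2*(1/2:ℝ)^(m'+2)) := by
    rw [hP3, hP2m]
    push_cast
    nlinarith [mul_nonneg hPnn hPnn, hPnn]
  push_cast at hmid htarget ⊢
  linarith [hmid, htarget]

lemma cross_le (n : ℕ) (R : Finset (Fin n)) :
    R.card * (n - R.card) ≤ Fintype.card (Edge n) := by
  classical
  rw [← card_cross R]
  exact Finset.card_le_univ _

lemma pr_upper (n : ℕ) (hn : 4 ≤ n) :
    2^(n-2) * Pr n (NP n) ≤ 1 + 8*(n:ℝ)^2*(1/2:ℝ)^(n-2) := by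
  classical
  have h0n : 0 < n := by omega
  have h1n : 1 < n := by omega
  set a : Fin n := ⟨0, h0n⟩ with hadef
  set s : Fin n := ⟨1, h1n⟩ with hsdef
  have hcnt := count_upper n a s rfl rfl
  rw [Pr_eq]
  set N := Fintype.card (Edge n) with hN
  set 𝓡 : Finset (Finset (Fin n)) := univ.filter (fun R => a ∈ R ∧ s ∉ R) with h𝓡
  set S : ℝ := ∑ R ∈ 𝓡, ((1/2:ℝ))^(R.card * (n - R.card)) with hS
  have hSnn : 0 ≤ S := by
    rw [hS]
    apply Finset.sum_nonneg
    intro R _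
    positivity
  have hC : (Nat.card {ω : Orient n // NP n ω} : ℝ) ≤ 2^N * S := by
    calc (Nat.card {ω : Orient n // NP n ω} : ℝ)
        ≤ ((∑ R ∈ 𝓡, 2^(N - R.card * (n - R.card)) : ℕ) : ℝ) := by exact_mod_cast hcnt
      _ = ∑ R ∈ 𝓡, ((2:ℝ))^(N - R.card * (n - R.card)) := by push_cast; rfl
      _ = ∑ R ∈ 𝓡, (2:ℝ)^N * (1/2)^(R.card * (n - R.card)) := by
          apply Finset.sum_congr rfl
          intro R _
          exact pow_sub_real N _ (cross_le n R)
      _ = 2^N * S := by rw [hS, Finset.mul_sum]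
  have hNpos : (0:ℝ) < 2^N := by positivity
  have hsum : S ≤ (1/2:ℝ)^(n-2) * (1 + 8*(n:ℝ)^2*(1/2:ℝ)^(n-2)) := by
    rw [hS]
    exact sum_bound n hn a s rfl rfl
  have hut : (2:ℝ)^(n-2) * (1/2)^(n-2) = 1 := by
    rw [← mul_pow]; norm_num
  calc (2:ℝ)^(n-2) * ((Nat.card {ω : Orient n // NP n ω} : ℝ) / 2^N)
      ≤ 2^(n-2) * ((2^N * S) / 2^N) := by
        apply mul_le_mul_of_nonneg_left _ (by positivity)
        exact div_le_div_of_nonneg_right hC (le_of_lt hNpos)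
    _ = 2^(n-2) * S := by
        rw [mul_comm ((2:ℝ)^N) S, mul_div_assoc, div_self (ne_of_gt hNpos), mul_one]
    _ ≤ 2^(n-2) * ((1/2:ℝ)^(n-2) * (1 + 8*(n:ℝ)^2*(1/2:ℝ)^(n-2))) :=
        mul_le_mul_of_nonneg_left hsum (by positivity)
    _ = 1 + 8*(n:ℝ)^2*(1/2:ℝ)^(n-2) := by
        rw [← mul_assoc, hut, one_mul]

theorem no_path_prob_asymp :
    Filter.Tendsto
      (fun n : ℕ => (2 : ℝ) ^ (n - 2) *
        Pr n (fun ω => ∀ a s : Fin n, a.val = 0 → s.val = 1 → ¬ reaches ω a s))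
      Filter.atTop (nhds 1) := by
  have hL : Filter.Tendsto (fun n : ℕ => 1 - (1/2:ℝ)^(n-1)) Filter.atTop (nhds 1) := by
    have h := tendsto_pow_atTop_nhds_zero_of_lt_one
      (by norm_num : (0:ℝ) ≤ 1/2) (by norm_num : (1/2:ℝ) < 1)
    have h2 : Filter.Tendsto (fun n : ℕ => (1/2:ℝ)^(n-1)) Filter.atTop (nhds 0) :=
      h.comp (Filter.tendsto_sub_atTop_nat 1)
    simpa using tendsto_const_nhds.sub h2
  have hU : Filter.Tendsto (fun n : ℕ => 1 + 8*(n:ℝ)^2*(1/2:ℝ)^(n-2)) Filter.atTop (nhds 1) := by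
    have h0 : Filter.Tendsto (fun n : ℕ => (n:ℝ)^2 * (1/2:ℝ)^n) Filter.atTop (nhds 0) :=
      tendsto_pow_const_mul_const_pow_of_lt_one 2 (by norm_num) (by norm_num)
    have h1 : Filter.Tendsto (fun n : ℕ => 32*((n:ℝ)^2 * (1/2:ℝ)^n)) Filter.atTop (nhds 0) := by
      simpa using h0.const_mul (32:ℝ)
    have heq : (fun n : ℕ => 32*((n:ℝ)^2 * (1/2:ℝ)^n))
        =ᶠ[Filter.atTop] (fun n : ℕ => 8*(n:ℝ)^2*(1/2:ℝ)^(n-2)) := by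
      filter_upwards [Filter.eventually_ge_atTop 2] with n hn
      obtain ⟨k, rfl⟩ : ∃ k, n = k + 2 := ⟨n - 2, by omega⟩
      rw [show k + 2 - 2 = k from by omega, pow_add]
      norm_num
      ring
    have h2 : Filter.Tendsto (fun n : ℕ => 8*(n:ℝ)^2*(1/2:ℝ)^(n-2)) Filter.atTop (nhds 0) :=
      h1.congr' heq
    simpa using tendsto_const_nhds.add h2
  apply tendsto_of_tendsto_of_tendsto_of_le_of_le' hL hU
  · filter_upwards [Filter.eventually_ge_atTop 2] with n hn
    exact pr_lower n hn
  · filter_upwards [Filter.eventually_ge_atTop 4] with n hn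
    exact pr_upper n hn
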